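/- Let C ⊂ P^n be an (n−k)-rope supported on a line with left type (β_1,...,β_k) and right type (α_0,...,α_{r−k}), r = n−2. Then the Rao function ρ_C(i) = h^1(I_C(i)) is given by ρ_C(i) = ∑_{j=0}^{r−k} C(i+α_j, 1) + ∑_{j=1}^k C(i−β_j, 1) − (r+1)·C(i, 1), with the convention C(a,1) = a if a ≥ 1 and 0 otherwise. -/

import Mathlib

open MvPolynomial Matrix Module

section Helpers
variable {K : Type*} [Field K]

lemma degree_fin2 (d : Fin 2 →₀ ℕ) : d.degree = d 0 + d 1 := by
  rw [Finsupp.degree_apply, Finset.sum_subset (Finset.subset_univ _)]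
  · exact Fin.sum_univ_two d
  · intro i _ hi; simpa using Finsupp.notMem_support_iff.mp hi

/-- index set of degree-`n` monomials in two variables. -/
noncomputable def hsIdx (n : ℕ) : {d : Fin 2 →₀ ℕ // d.degree = n} ≃ Fin (n + 1) where
  toFun d := ⟨d.1 0, by have := Finsupp.le_degree (0 : Fin 2) d.1; omega⟩
  invFun j := ⟨Finsupp.single 0 (j : ℕ) + Finsupp.single 1 (n - j), by
    have := j.2
    simp [degree_fin2, Finsupp.single_apply]
    omega⟩
  left_inv d := by
    have hd := d.2
    rw [degree_fin2] at hd
    ext i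
    fin_cases i <;> simp [Finsupp.single_apply] <;> omega
  right_inv j := by simp [Finsupp.single_apply]

noncomputable def hsEquiv (K : Type*) [Field K] (n : ℕ) :
    (homogeneousSubmodule (Fin 2) K n) ≃ₗ[K] (Fin (n + 1) →₀ K) :=
  (LinearEquiv.ofEq _ _ (homogeneousSubmodule_eq_finsupp_supported (Fin 2) K n)).trans
    ((AddMonoidAlgebra.supportedEquivFinsupp _).trans
      (Finsupp.domLCongr (hsIdx n)))

instance (n : ℕ) : FiniteDimensional K (homogeneousSubmodule (Fin 2) K n) :=
  Module.Finite.equiv (hsEquiv K n).symm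

lemma finrank_hs (n : ℕ) : finrank K (homogeneousSubmodule (Fin 2) K n) = n + 1 := by
  rw [(hsEquiv K n).finrank_eq, finrank_finsupp_self, Fintype.card_fin]

end Helpers

section Helpers2
variable {K : Type*} [Field K]

/-- degree-`e` graded piece (ℤ-indexed). -/
noncomputable def hzd (K : Type*) [Field K] (e : ℤ) : Submodule K (MvPolynomial (Fin 2) K) :=
  if 0 ≤ e then homogeneousSubmodule (Fin 2) K e.toNat else ⊥

instance (e : ℤ) : FiniteDimensional K (hzd K e) := by
  rcases le_or_gt 0 e with h | h
  · rw [hzd, if_pos h]; infer_instance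
  · rw [hzd, if_neg (by omega)]; infer_instance

lemma finrank_hzd (e : ℤ) : (finrank K (hzd K e) : ℤ) = max (e + 1) 0 := by
  rcases le_or_gt 0 e with h | h
  · rw [hzd, if_pos h, finrank_hs]; omega
  · rw [hzd, if_neg (by omega), finrank_bot]; omega

lemma hzd_natCast (n : ℕ) : hzd K (n : ℤ) = homogeneousSubmodule (Fin 2) K n := by
  simp [hzd]

lemma mem_hzd_iff {e : ℤ} (he : 0 ≤ e) {p : MvPolynomial (Fin 2) K} :
    p ∈ hzd K e ↔ p.IsHomogeneous e.toNat := by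
  rw [hzd, if_pos he, mem_homogeneousSubmodule]

lemma hzd_neg {e : ℤ} (he : e < 0) : hzd K e = ⊥ := by rw [hzd, if_neg (by omega)]

lemma mul_mem_hzd {p q : MvPolynomial (Fin 2) K} {m : ℕ} {e : ℤ}
    (hp : p.IsHomogeneous m) (hq : q ∈ hzd K e) : p * q ∈ hzd K (e + m) := by
  by_cases he : 0 ≤ e
  · rw [mem_hzd_iff he] at hq
    rw [mem_hzd_iff (by omega)]
    have : (e + m).toNat = m + e.toNat := by omega
    rw [this]
    exact hp.mul hq
  · rw [hzd_neg (by omega)] at hq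
    simp only [Submodule.mem_bot] at hq
    simp [hq]

/-- `Submodule.pi` of submodules is equivalent to the pi of the submodules. -/
def piSubEquiv {ι : Type*} {M : ι → Type*} [∀ i, AddCommGroup (M i)] [∀ i, Module K (M i)]
    (p : ∀ i, Submodule K (M i)) :
    (Submodule.pi Set.univ p) ≃ₗ[K] ((i : ι) → p i) where
  toFun v i := ⟨v.1 i, v.2 i (Set.mem_univ i)⟩
  map_add' _ _ := rfl
  map_smul' _ _ := rfl
  invFun f := ⟨fun i => f i, fun i _ => (f i).2⟩
  left_inv v := rfl
  right_inv f := rfl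

instance {ι : Type*} [Fintype ι] {M : ι → Type*} [∀ i, AddCommGroup (M i)] [∀ i, Module K (M i)]
    (p : ∀ i, Submodule K (M i)) [∀ i, FiniteDimensional K (p i)] :
    FiniteDimensional K (Submodule.pi Set.univ p) :=
  Module.Finite.equiv (piSubEquiv p).symm

lemma finrank_piSub {ι : Type*} [Fintype ι] {M : ι → Type*} [∀ i, AddCommGroup (M i)]
    [∀ i, Module K (M i)] (p : ∀ i, Submodule K (M i)) [∀ i, FiniteDimensional K (p i)] :
    finrank K (Submodule.pi Set.univ p) = ∑ i, finrank K (p i) := by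
  rw [(piSubEquiv p).finrank_eq, Module.finrank_pi_fintype]

end Helpers2

section Helpers3
variable {K : Type*} [Field K]

lemma homComp_mul {p q : MvPolynomial (Fin 2) K} {m : ℕ} (hp : p.IsHomogeneous m) (n : ℕ) :
    homogeneousComponent (m + n) (p * q) = p * homogeneousComponent n q := by
  have hq := q.sum_homogeneousComponent
  calc homogeneousComponent (m + n) (p * q)
      = homogeneousComponent (m + n)
          (∑ d ∈ Finset.range (q.totalDegree + 1), p * homogeneousComponent d q) := by
        rw [← Finset.mul_sum, hq]
    _ = ∑ d ∈ Finset.range (q.totalDegree + 1),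
          homogeneousComponent (m + n) (p * homogeneousComponent d q) := map_sum _ _ _
    _ = ∑ d ∈ Finset.range (q.totalDegree + 1),
          if m + n = m + d then p * homogeneousComponent d q else 0 := by
        refine Finset.sum_congr rfl fun d _ => ?_
        exact homogeneousComponent_of_mem (hp.mul (homogeneousComponent_isHomogeneous d q))
    _ = ∑ d ∈ Finset.range (q.totalDegree + 1),
          if n = d then p * homogeneousComponent d q else 0 := by
        refine Finset.sum_congr rfl fun d _ => ?_
        simp [Nat.add_left_cancel_iff]
    _ = p * homogeneousComponent n q := by
        rw [Finset.sum_ite_eq]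
        split
        · rfl
        · rename_i h
          rw [homogeneousComponent_eq_zero _ q (by simp at h; omega), mul_zero]

lemma homComp_mul_lt {p q : MvPolynomial (Fin 2) K} {m n : ℕ} (hp : p.IsHomogeneous m)
    (hn : n < m) : homogeneousComponent n (p * q) = 0 := by
  have hq := q.sum_homogeneousComponent
  calc homogeneousComponent n (p * q)
      = ∑ d ∈ Finset.range (q.totalDegree + 1),
          homogeneousComponent n (p * homogeneousComponent d q) := by
        rw [← map_sum, ← Finset.mul_sum, hq]
    _ = 0 := by
        refine Finset.sum_eq_zero fun d _ => ?_
        rw [homogeneousComponent_of_mem (hp.mul (homogeneousComponent_isHomogeneous d q)),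
          if_neg (by omega)]

end Helpers3

section Master
set_option maxHeartbeats 1000000
set_option synthInstance.maxHeartbeats 200000
variable {K : Type*} [Field K]

lemma mulVec_apply' {a b : ℕ} (A : Matrix (Fin a) (Fin b) (MvPolynomial (Fin 2) K))
    (v : Fin b → MvPolynomial (Fin 2) K) (j : Fin a) :
    (A.mulVecLin.restrictScalars K) v j = ∑ l, A j l * v l := by
  simp [Matrix.mulVecLin_apply, Matrix.mulVec, dotProduct]

lemma master {a b c : ℕ} (α : Fin a → ℕ) (β : Fin c → ℕ)
    (A : Matrix (Fin a) (Fin b) (MvPolynomial (Fin 2) K))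
    (B : Matrix (Fin b) (Fin c) (MvPolynomial (Fin 2) K))
    (hA : ∀ i j, (A i j).IsHomogeneous (α i))
    (hB : ∀ i j, (B i j).IsHomogeneous (β j))
    (hAB : A * B = 0)
    (hinj : Function.Injective B.mulVecLin)
    (hexact : LinearMap.range B.mulVecLin = LinearMap.ker A.mulVecLin)
    (i : ℤ) :
    (finrank K (↥(Submodule.pi Set.univ fun j => hzd K (i + α j - 1)) ⧸
      Submodule.comap (Submodule.pi Set.univ fun j => hzd K (i + α j - 1)).subtype
        ((LinearMap.range A.mulVecLin).restrictScalars K)) : ℤ)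
      = ∑ j, max (i + α j) 0 + ∑ j, max (i - β j) 0 - b * max i 0 := by
  set Tα : Submodule K (Fin a → MvPolynomial (Fin 2) K) :=
    Submodule.pi Set.univ fun j => hzd K (i + α j - 1) with hTα
  set Sb : Submodule K (Fin b → MvPolynomial (Fin 2) K) :=
    Submodule.pi Set.univ fun _ => hzd K (i - 1) with hSb
  set Tβ : Submodule K (Fin c → MvPolynomial (Fin 2) K) :=
    Submodule.pi Set.univ fun j => hzd K (i - β j - 1) with hTβ
  set fA : (Fin b → MvPolynomial (Fin 2) K) →ₗ[K] (Fin a → MvPolynomial (Fin 2) K) :=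
    A.mulVecLin.restrictScalars K with hfA
  set fB : (Fin c → MvPolynomial (Fin 2) K) →ₗ[K] (Fin b → MvPolynomial (Fin 2) K) :=
    B.mulVecLin.restrictScalars K with hfB
  -- the image of the degree-(i-1) piece lands in `Tα`
  have hW_le : Submodule.map fA Sb ≤ Tα := by
    rintro x ⟨v, hv, rfl⟩ j -
    rw [hfA, mulVec_apply']
    refine Submodule.sum_mem _ fun l _ => ?_
    have h1 := mul_mem_hzd (hA j l) (hv l (Set.mem_univ l))
    have h2 : (i - 1) + (α j : ℤ) = i + α j - 1 := by ring
    rwa [h2] at h1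
  -- the degree-`i` piece of the image of `A` is the image of the degree-(i-1) piece
  have hcomap : Submodule.comap Tα.subtype ((LinearMap.range A.mulVecLin).restrictScalars K)
      = Submodule.comap Tα.subtype (Submodule.map fA Sb) := by
    refine le_antisymm ?_ (Submodule.comap_mono ?_)
    · rintro ⟨t, ht⟩ hmem
      obtain ⟨v, hv0⟩ := hmem
      have hv : A.mulVecLin v = t := hv0
      show t ∈ Submodule.map fA Sb
      by_cases hi : 1 ≤ i
      · refine ⟨fun l => homogeneousComponent (i - 1).toNat (v l), fun l _ => ?_, ?_⟩
        · show homogeneousComponent (i - 1).toNat (v l) ∈ hzd K (i - 1)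
          rw [mem_hzd_iff (by omega)]
          exact homogeneousComponent_isHomogeneous _ _
        · funext j
          have htj : (t j).IsHomogeneous (i + α j - 1).toNat := by
            have h0 : t j ∈ hzd K (i + α j - 1) := ht j (Set.mem_univ j)
            rwa [mem_hzd_iff (by omega)] at h0
          have hNj : (i + α j - 1).toNat = α j + (i - 1).toNat := by omega
          calc fA (fun l => homogeneousComponent (i - 1).toNat (v l)) j
              = ∑ l, A j l * homogeneousComponent (i - 1).toNat (v l) := by
                rw [hfA, mulVec_apply']
            _ = ∑ l, homogeneousComponent (α j + (i - 1).toNat) (A j l * v l) := by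
                exact Finset.sum_congr rfl fun l _ => (homComp_mul (hA j l) _).symm
            _ = homogeneousComponent (α j + (i - 1).toNat) (∑ l, A j l * v l) :=
                (map_sum _ _ _).symm
            _ = homogeneousComponent (α j + (i - 1).toNat) (t j) := by
                rw [← hv]; congr 1
                all_goals simp [Matrix.mulVecLin_apply, Matrix.mulVec, dotProduct]
            _ = t j := by
                rw [← hNj, homogeneousComponent_of_mem htj, if_pos rfl]
      · refine ⟨0, Submodule.zero_mem _, ?_⟩
        rw [map_zero]
        funext j
        show (0 : Fin a → MvPolynomial (Fin 2) K) j = t j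
        rw [Pi.zero_apply]
        symm
        have htj : t j ∈ hzd K (i + α j - 1) := ht j (Set.mem_univ j)
        by_cases hj : 0 ≤ i + α j - 1
        · rw [mem_hzd_iff hj] at htj
          have h1 : t j = homogeneousComponent (i + α j - 1).toNat (t j) := by
            rw [homogeneousComponent_of_mem htj, if_pos rfl]
          rw [h1, ← hv]
          have h2 : A.mulVecLin v j = ∑ l, A j l * v l := by
            simp [Matrix.mulVecLin_apply, Matrix.mulVec, dotProduct]
          rw [h2, map_sum]
          exact Finset.sum_eq_zero fun l _ => homComp_mul_lt (hA j l) (by omega)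
        · rw [hzd_neg (by omega)] at htj
          simpa using htj
    · rintro x ⟨v, hv, rfl⟩
      exact ⟨v, rfl⟩
  -- the kernel in the degree-(i-1) piece is the image of `B` on the twisted piece
  have hker : Sb ⊓ (LinearMap.ker A.mulVecLin).restrictScalars K = Submodule.map fB Tβ := by
    refine le_antisymm ?_ ?_
    · rintro v ⟨hvS, hvK⟩
      have hin : v ∈ LinearMap.range B.mulVecLin := by
        rw [hexact]; exact hvK
      obtain ⟨w, hw⟩ := hin
      by_cases hi : 1 ≤ i
      · refine ⟨fun j => if h : 0 ≤ i - β j - 1 then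
            homogeneousComponent (i - β j - 1).toNat (w j) else 0, fun j _ => ?_, ?_⟩
        · show (if h : 0 ≤ i - β j - 1 then
              homogeneousComponent (i - β j - 1).toNat (w j) else 0) ∈ hzd K (i - β j - 1)
          split
          · rw [mem_hzd_iff ‹_›]
            exact homogeneousComponent_isHomogeneous _ _
          · rw [hzd_neg (by omega)]
            exact Submodule.zero_mem _
        · funext l
          have hvl : (v l).IsHomogeneous (i - 1).toNat := by
            have h0 : v l ∈ hzd K (i - 1) := hvS l (Set.mem_univ l)
            rwa [mem_hzd_iff (by omega)] at h0
          calc fB (fun j => if h : 0 ≤ i - β j - 1 then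
                homogeneousComponent (i - β j - 1).toNat (w j) else 0) l
              = ∑ j, B l j * (if h : 0 ≤ i - β j - 1 then
                homogeneousComponent (i - β j - 1).toNat (w j) else 0) := by
                rw [hfB, mulVec_apply']
            _ = ∑ j, homogeneousComponent (i - 1).toNat (B l j * w j) := by
                refine Finset.sum_congr rfl fun j _ => ?_
                by_cases hj : 0 ≤ i - β j - 1
                · rw [dif_pos hj]
                  have hN : (i - 1).toNat = β j + (i - β j - 1).toNat := by omega
                  rw [hN, homComp_mul (hB l j)]
                · rw [dif_neg hj, mul_zero,
                    homComp_mul_lt (hB l j) (show (i-1).toNat < β j by omega)]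
            _ = homogeneousComponent (i - 1).toNat (∑ j, B l j * w j) := (map_sum _ _ _).symm
            _ = homogeneousComponent (i - 1).toNat (v l) := by
                rw [← hw]; congr 1
                all_goals simp [Matrix.mulVecLin_apply, Matrix.mulVec, dotProduct]
            _ = v l := by rw [homogeneousComponent_of_mem hvl, if_pos rfl]
      · refine ⟨0, Submodule.zero_mem _, ?_⟩
        rw [map_zero]
        funext l
        show (0 : Fin b → MvPolynomial (Fin 2) K) l = v l
        rw [Pi.zero_apply]
        symm
        have h0 : v l ∈ hzd K (i - 1) := hvS l (Set.mem_univ l)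
        rw [hzd_neg (by omega)] at h0
        simpa using h0
    · rintro x ⟨w, hw, rfl⟩
      refine ⟨fun l _ => ?_, ?_⟩
      · show (fB w) l ∈ hzd K (i - 1)
        rw [hfB, mulVec_apply']
        refine Submodule.sum_mem _ fun j _ => ?_
        have h1 := mul_mem_hzd (hB l j) (hw j (Set.mem_univ j))
        have h2 : (i - β j - 1) + (β j : ℤ) = i - 1 := by ring
        rwa [h2] at h1
      · show A.mulVecLin (fB w) = 0
        show A.mulVec (B.mulVec w) = 0
        rw [Matrix.mulVec_mulVec, hAB, Matrix.zero_mulVec]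
  -- dimension counts
  have dTα : (finrank K Tα : ℤ) = ∑ j, max (i + α j) 0 := by
    rw [hTα, finrank_piSub, Nat.cast_sum]
    refine Finset.sum_congr rfl fun j _ => ?_
    rw [finrank_hzd]
    congr 1
    ring
  have dSb : (finrank K Sb : ℤ) = b * max i 0 := by
    rw [hSb, finrank_piSub, Finset.sum_const, Finset.card_univ, Fintype.card_fin,
      smul_eq_mul, Nat.cast_mul, finrank_hzd]
    have h : i - 1 + 1 = i := by ring
    rw [h]
  have dTβ : (finrank K Tβ : ℤ) = ∑ j, max (i - β j) 0 := by
    rw [hTβ, finrank_piSub, Nat.cast_sum]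
    refine Finset.sum_congr rfl fun j _ => ?_
    rw [finrank_hzd]
    congr 1
    ring
  have hinjB : Function.Injective fB := hinj
  -- rank-nullity for the restriction of `A`
  have e1 : finrank K (Submodule.map fA Sb) + finrank K (Submodule.map fB Tβ)
      = finrank K Sb := by
    have h0 := LinearMap.finrank_range_add_finrank_ker (fA.domRestrict Sb)
    rw [LinearMap.range_domRestrict, LinearMap.ker_domRestrict] at h0
    have h2 : Submodule.comap Sb.subtype (LinearMap.ker fA)
        = Submodule.comap Sb.subtype (Sb ⊓ (LinearMap.ker A.mulVecLin).restrictScalars K) := by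
      ext ⟨x, hx⟩
      rw [hfA, LinearMap.ker_restrictScalars]
      simp [Submodule.mem_comap, hx]
    have h3 : finrank K (Submodule.comap Sb.subtype
          (Sb ⊓ (LinearMap.ker A.mulVecLin).restrictScalars K))
        = finrank K ↥(Sb ⊓ (LinearMap.ker A.mulVecLin).restrictScalars K) :=
      (Submodule.comapSubtypeEquivOfLe inf_le_left).finrank_eq
    rw [h2, h3, hker] at h0
    exact h0
  have e2 : finrank K (Submodule.map fB Tβ) = finrank K Tβ :=
    ((Submodule.equivMapOfInjective fB hinjB Tβ).finrank_eq).symm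
  -- quotient dimension
  rw [hcomap]
  haveI : FiniteDimensional K Tα := by rw [hTα]; infer_instance
  have e3 := Submodule.finrank_quotient_add_finrank
    (Submodule.comap Tα.subtype (Submodule.map fA Sb))
  have h4 : finrank K (Submodule.comap Tα.subtype (Submodule.map fA Sb))
      = finrank K (Submodule.map fA Sb) :=
    (Submodule.comapSubtypeEquivOfLe hW_le).finrank_eq
  rw [h4] at e3
  zify at e1 e3
  omega

end Master


/-- Let `C ⊂ Pⁿ` be an `(n-k)`-rope on a line, with associated exact
sequence `0 → ⊕_{j=1}^k S(-β_j-1) →^B S^{r+1}(-1) →^A ⊕_{i=0}^{r-k} S(α_i-1) → 0`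
(`r = n-2`, `S = K[t,u]`), where the maximal-minor ideals of `A` and `B` have codimension 2
(encoded by the radical condition below).  By the identification
`H¹_*(I_C) ≅ coker φ_A` (Hartshorne–Rao module of the rope), the Rao function
`ρ_C(i) = h¹(I_C(i))` is the `K`-dimension of the degree-`i` piece of `coker φ_A`, and it
equals `∑_{j} C(i+α_j,1) + ∑_j C(i-β_j,1) - (r+1)·C(i,1)`, with `C(a,1) = max a 0`. -/
theorem stmt4 {K : Type*} [Field K] (r k : ℕ) (hk1 : 1 ≤ k) (hkr : k ≤ r)
    (α : Fin (r + 1 - k) → ℕ) (β : Fin k → ℕ)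
    (hαpos : ∀ i, 1 ≤ α i) (hβpos : ∀ j, 1 ≤ β j)
    (A : Matrix (Fin (r + 1 - k)) (Fin (r + 1)) (MvPolynomial (Fin 2) K))
    (B : Matrix (Fin (r + 1)) (Fin k) (MvPolynomial (Fin 2) K))
    (hA : ∀ i j, (A i j).IsHomogeneous (α i))
    (hB : ∀ i j, (B i j).IsHomogeneous (β j))
    (hAB : A * B = 0)
    (hinj : Function.Injective B.mulVecLin)
    (hexact : LinearMap.range B.mulVecLin = LinearMap.ker A.mulVecLin)
    -- `codim I_k(B) = 2`
    (hcodimB : Ideal.span {(X 0 : MvPolynomial (Fin 2) K), X 1} ≤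
      (Ideal.span {f | ∃ c : Fin k ↪ Fin (r + 1), f = (B.submatrix ⇑c id).det}).radical)
    -- `codim I_{r+1-k}(A) = 2`
    (hcodimA : Ideal.span {(X 0 : MvPolynomial (Fin 2) K), X 1} ≤
      (Ideal.span {f | ∃ c : Fin (r + 1 - k) ↪ Fin (r + 1),
        f = (A.submatrix id ⇑c).det}).radical)
    (hz : ℤ → Submodule K (MvPolynomial (Fin 2) K))
    (hhz : ∀ e : ℤ, hz e = if h : 0 ≤ e then
      MvPolynomial.homogeneousSubmodule (Fin 2) K e.toNat else ⊥)
    -- degree-`i` piece of the twisted target `⊕_j S(α_j - 1)`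
    (T : ℤ → Submodule K (Fin (r + 1 - k) → MvPolynomial (Fin 2) K))
    (hT : ∀ i : ℤ, T i = Submodule.pi Set.univ fun j => hz (i + α j - 1))
    -- the Rao function of `C`: Hilbert function of `coker φ_A ≅ H¹_*(I_C)`
    (ρ : ℤ → ℕ)
    (hρ : ∀ i : ℤ, ρ i = Module.finrank K (↥(T i) ⧸ Submodule.comap (T i).subtype
      ((LinearMap.range A.mulVecLin).restrictScalars K))) :
    ∀ i : ℤ, (ρ i : ℤ)
      = ∑ j, max (i + α j) 0 + ∑ j, max (i - β j) 0 - (r + 1) * max i 0 := by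
  have hze : hz = hzd K := by
    funext e
    rw [hhz e, hzd]
    exact dite_eq_ite
  intro i
  rw [hρ i, hT i, hze, master α β A B hA hB hAB hinj hexact i]
  push_cast
  ring
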